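/- If V ∈ 𝓕, then Λ(Ψ(V)) ∈ 𝓕. -/

import Mathlib

/-- The upset of `A` within `[0,1]^K`: points of `[0,1]^K` dominating some point of `A`. -/
def upset (K : ℕ) (A : Set (Fin K → ℝ)) : Set (Fin K → ℝ) :=
  {x | x ∈ Set.Icc (0 : Fin K → ℝ) 1 ∧ ∃ y ∈ A, y ≤ x}

/-- Membership in the space `𝓕`: a nonempty Pareto frontier in `[0,1]^K`
(no element dominates a different element) whose upset is closed and convex. -/
def memF (K : ℕ) (V : Set (Fin K → ℝ)) : Prop :=
  V.Nonempty ∧ V ⊆ Set.Icc (0 : Fin K → ℝ) 1 ∧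
    (∀ u ∈ V, ∀ v ∈ V, u ≤ v → u = v) ∧
    IsClosed (upset K V) ∧ Convex ℝ (upset K V)

/-- The metric `d` on `𝓕`: Hausdorff distance (for the ℓ∞ norm) between upsets. -/
noncomputable def dF (K : ℕ) (U V : Set (Fin K → ℝ)) : ℝ :=
  Metric.hausdorffDist (upset K U) (upset K V)

/-- The lower Pareto frontier `Λ(S)`: the minimal elements of `S` in the
coordinatewise order, i.e. the elements of `S` dominating no other element of `S`. -/
def pareto (K : ℕ) (S : Set (Fin K → ℝ)) : Set (Fin K → ℝ) :=
  {x ∈ S | ∀ y ∈ S, y ≤ x → y = x}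

/-- The probability simplex over `Fin m`. -/
def simplex (m : ℕ) : Set (Fin m → ℝ) :=
  {α | (∀ a, 0 ≤ α a) ∧ ∑ a, α a = 1}

/-- The one-stage operator `Ψ`. -/
def psi (K m n : ℕ) (hn : 0 < n) (β : ℝ) (r : Fin K → Fin m → Fin n → ℝ)
    (S : Set (Fin K → ℝ)) : Set (Fin K → ℝ) :=
  {u | ∃ α ∈ simplex m, ∃ R : Fin m → Fin n → Fin K → ℝ,
    (∀ a b, R a b ∈ S) ∧
    ∀ k, u k = Finset.univ.sup'
      (Finset.univ_nonempty_iff.mpr (Fin.pos_iff_nonempty.mp hn))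
      (fun b => ∑ a, α a * (r k a b + β * R a b k))}

section ORDER_AUX
variable {K : ℕ}

lemma self_mem_upset {V : Set (Fin K → ℝ)} (hV : V ⊆ Set.Icc 0 1) {v} (hv : v ∈ V) :
    v ∈ upset K V := ⟨hV hv, v, hv, le_refl v⟩

lemma upset_idem {A : Set (Fin K → ℝ)} : upset K (upset K A) = upset K A := by
  ext x
  constructor
  · rintro ⟨hx, y, ⟨hy, z, hz, hzy⟩, hyx⟩
    exact ⟨hx, z, hz, hzy.trans hyx⟩
  · rintro hx
    exact ⟨hx.1, x, hx, le_refl x⟩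

lemma exists_min_compact {C : Set (Fin K → ℝ)} (hC : IsCompact C) (hne : C.Nonempty) :
    ∃ x ∈ C, ∀ y ∈ C, y ≤ x → y = x := by
  obtain ⟨x, hxC, hx⟩ := hC.exists_isMinOn hne
    (Continuous.continuousOn (by fun_prop : Continuous fun x : Fin K → ℝ => ∑ k, x k))
  refine ⟨x, hxC, fun y hy hyx => ?_⟩
  have h1 : ∑ k, x k ≤ ∑ k, y k := hx hy
  have h2 : ∀ k ∈ Finset.univ, y k ≤ x k := fun k _ => hyx k
  have h3 := (Finset.sum_eq_sum_iff_of_le h2).mp (le_antisymm (Finset.sum_le_sum h2) h1)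
  funext k; exact h3 k (Finset.mem_univ k)

lemma pareto_upset_eq {S : Set (Fin K → ℝ)} (hS : S ⊆ Set.Icc 0 1) :
    pareto K (upset K S) = pareto K S := by
  ext x
  constructor
  · rintro ⟨⟨hxb, z, hzS, hzx⟩, hmin⟩
    have hz' : z ∈ upset K S := self_mem_upset hS hzS
    have hzx' : z = x := hmin z hz' hzx
    subst hzx'
    refine ⟨hzS, fun y hyS hyx => hmin y (self_mem_upset hS hyS) hyx⟩
  · rintro ⟨hxS, hmin⟩
    refine ⟨self_mem_upset hS hxS, fun y hy hyx => ?_⟩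
    obtain ⟨hyb, z, hzS, hzy⟩ := hy
    have := hmin z hzS (hzy.trans hyx)
    subst this
    exact le_antisymm hyx hzy

lemma upset_pareto_of_compact {T : Set (Fin K → ℝ)} (hT : IsCompact T)
    (hTbox : T ⊆ Set.Icc 0 1) (hup : upset K T = T) :
    upset K (pareto K T) = T := by
  ext x
  constructor
  · rintro ⟨hxb, y, hy, hyx⟩
    rw [← hup]; exact ⟨hxb, y, hy.1, hyx⟩
  · intro hx
    have hC : IsCompact (T ∩ Set.Iic x) := hT.inter_right isClosed_Iic
    obtain ⟨y, ⟨hyT, hyx⟩, hymin⟩ := exists_min_compact hC ⟨x, hx, le_refl x⟩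
    refine ⟨hTbox hx, y, ⟨hyT, fun z hzT hzy => hymin z ⟨hzT, hzy.trans hyx⟩ hzy⟩, hyx⟩

end ORDER_AUX

lemma simplex_isCompact (m : ℕ) : IsCompact (simplex m) := by
  have hsub : simplex m ⊆ Set.Icc (0 : Fin m → ℝ) 1 := by
    rintro α ⟨h0, h1⟩
    refine ⟨fun a => h0 a, fun a => ?_⟩
    calc α a ≤ ∑ a', α a' := Finset.single_le_sum (fun a' _ => h0 a') (Finset.mem_univ a)
    _ = 1 := h1
  have hclosed : IsClosed (simplex m) := by
    have heq : simplex m = (⋂ a, {α : Fin m → ℝ | 0 ≤ α a}) ∩ {α | ∑ a, α a = 1} := by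
      ext α; simp [simplex, Set.mem_iInter]
    rw [heq]
    exact (isClosed_iInter fun a => isClosed_le continuous_const (continuous_apply a)).inter
      (isClosed_eq (by fun_prop) continuous_const)
  exact isCompact_Icc.of_isClosed_subset hclosed hsub

section PSI_AUX
variable {K m n : ℕ} (hn : 0 < n) {β : ℝ} (hβ : β ∈ Set.Ico (0:ℝ) 1)
  {r : Fin K → Fin m → Fin n → ℝ} (hr : ∀ k a b, r k a b ∈ Set.Icc (0:ℝ) (1 - β))

lemma psi_mono {S S' : Set (Fin K → ℝ)} (h : S ⊆ S') :
    psi K m n hn β r S ⊆ psi K m n hn β r S' := by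
  rintro u ⟨α, hα, R, hR, hu⟩
  exact ⟨α, hα, R, fun a b => h (hR a b), hu⟩

include hβ hr in
lemma psi_subset_Icc {S : Set (Fin K → ℝ)} (hS : S ⊆ Set.Icc 0 1) :
    psi K m n hn β r S ⊆ Set.Icc (0 : Fin K → ℝ) 1 := by
  rintro u ⟨α, hα, R, hR, hu⟩
  have hterm : ∀ k b, (0:ℝ) ≤ ∑ a, α a * (r k a b + β * R a b k) ∧
      ∑ a, α a * (r k a b + β * R a b k) ≤ 1 := by
    intro k b
    constructor
    · refine Finset.sum_nonneg fun a _ => mul_nonneg (hα.1 a) ?_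
      have h0 : (0:ℝ) ≤ R a b k := (hS (hR a b)).1 k
      have := (hr k a b).1
      nlinarith [hβ.1]
    · calc ∑ a, α a * (r k a b + β * R a b k) ≤ ∑ a, α a * 1 := by
            refine Finset.sum_le_sum fun a _ => mul_le_mul_of_nonneg_left ?_ (hα.1 a)
            have h1 : R a b k ≤ 1 := (hS (hR a b)).2 k
            have := (hr k a b).2
            nlinarith [hβ.1]
      _ = 1 := by simp [hα.2]
  constructor
  · intro k
    rw [hu k]
    have hb0 : (⟨0, hn⟩ : Fin n) ∈ Finset.univ := Finset.mem_univ _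
    exact le_trans (hterm k ⟨0, hn⟩).1
      (Finset.le_sup' (fun b => ∑ a, α a * (r k a b + β * R a b k)) hb0)
  · intro k
    rw [hu k]
    exact Finset.sup'_le _ (fun b => ∑ a, α a * (r k a b + β * R a b k)) fun b _ => (hterm k b).2

lemma psi_nonempty {S : Set (Fin K → ℝ)} (hm : 0 < m) (hS : S.Nonempty) :
    (psi K m n hn β r S).Nonempty := by
  classical
  obtain ⟨v, hv⟩ := hS
  set a0 : Fin m := ⟨0, hm⟩
  set α : Fin m → ℝ := fun a => if a = a0 then 1 else 0 with hαdef
  have hα : α ∈ simplex m := by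
    constructor
    · intro a; dsimp only [α]; positivity
    · simp [α]
  exact ⟨fun k => Finset.univ.sup'
      (Finset.univ_nonempty_iff.mpr (Fin.pos_iff_nonempty.mp hn))
      (fun b => ∑ a, α a * (r k a b + β * v k)),
    α, hα, fun _ _ => v, fun _ _ => hv, fun k => rfl⟩

include hβ in
lemma psi_upset_le {V : Set (Fin K → ℝ)} {u : Fin K → ℝ}
    (hu : u ∈ psi K m n hn β r (upset K V)) :
    ∃ u' ∈ psi K m n hn β r V, u' ≤ u := by
  obtain ⟨α, hα, R, hR, hu⟩ := hu
  have hch : ∀ a b, ∃ v ∈ V, v ≤ R a b := fun a b => (hR a b).2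
  choose R' hR'mem hR'le using hch
  refine ⟨fun k => Finset.univ.sup'
      (Finset.univ_nonempty_iff.mpr (Fin.pos_iff_nonempty.mp hn))
      (fun b => ∑ a, α a * (r k a b + β * R' a b k)),
    ⟨α, hα, R', hR'mem, fun k => rfl⟩, ?_⟩
  intro k
  rw [hu k]
  refine Finset.sup'_le _ _ fun b hb => ?_
  refine le_trans (Finset.sum_le_sum fun a _ => ?_)
    (Finset.le_sup' (fun b => ∑ a, α a * (r k a b + β * R a b k)) hb)
  refine mul_le_mul_of_nonneg_left (add_le_add_right ?_ _) (hα.1 a)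
  exact mul_le_mul_of_nonneg_left (hR'le a b k) hβ.1

lemma psi_isCompact {W : Set (Fin K → ℝ)} (hW : IsCompact W) :
    IsCompact (psi K m n hn β r W) := by
  classical
  have hne : (Finset.univ : Finset (Fin n)).Nonempty :=
    Finset.univ_nonempty_iff.mpr (Fin.pos_iff_nonempty.mp hn)
  set D := (simplex m) ×ˢ Set.pi Set.univ (fun _ : Fin m => Set.pi Set.univ fun _ : Fin n => W)
    with hD
  set F : (Fin m → ℝ) × (Fin m → Fin n → Fin K → ℝ) → (Fin K → ℝ) :=
    fun p k => Finset.univ.sup' hne (fun b => ∑ a, p.1 a * (r k a b + β * p.2 a b k)) with hF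
  have himg : psi K m n hn β r W = F '' D := by
    ext u
    constructor
    · rintro ⟨α, hα, R, hR, hu⟩
      refine ⟨(α, R), ⟨hα, ?_⟩, ?_⟩
      · intro a _ b _
        exact hR a b
      · funext k; exact (hu k).symm
    · rintro ⟨⟨α, R⟩, ⟨hα, hR⟩, rfl⟩
      exact ⟨α, hα, R, fun a b => hR a (Set.mem_univ a) b (Set.mem_univ b), fun k => rfl⟩
  have hDc : IsCompact D :=
    (simplex_isCompact m).prod (isCompact_univ_pi fun _ => isCompact_univ_pi fun _ => hW)
  have hFc : Continuous F := by
    apply continuous_pi; intro k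
    apply Continuous.finset_sup'_apply
    intro b _
    fun_prop
  rw [himg]; exact hDc.image hFc

omit hβ hr in
lemma psi_convex_comb {W : Set (Fin K → ℝ)} (hWc : Convex ℝ W)
    {w0 : Fin K → ℝ} (hw0 : w0 ∈ W)
    {u1 u2 : Fin K → ℝ} (h1 : u1 ∈ psi K m n hn β r W) (h2 : u2 ∈ psi K m n hn β r W)
    {p q : ℝ} (hp : 0 ≤ p) (hq : 0 ≤ q) (hpq : p + q = 1) :
    ∃ u ∈ psi K m n hn β r W, u ≤ p • u1 + q • u2 := by
  classical
  obtain ⟨α1, hα1, R1, hR1, hu1⟩ := h1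
  obtain ⟨α2, hα2, R2, hR2, hu2⟩ := h2
  set c : Fin m → ℝ := fun a => p * α1 a + q * α2 a with hc
  have hceq : ∀ a, p * α1 a + q * α2 a = c a := fun a => rfl
  have hc0 : ∀ a, 0 ≤ c a := fun a =>
    add_nonneg (mul_nonneg hp (hα1.1 a)) (mul_nonneg hq (hα2.1 a))
  have hcs : c ∈ simplex m := by
    refine ⟨hc0, ?_⟩
    have : ∑ a, c a = ∑ a, (p * α1 a + q * α2 a) := rfl
    rw [this, Finset.sum_add_distrib, ← Finset.mul_sum, ← Finset.mul_sum, hα1.2, hα2.2,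
      mul_one, mul_one, hpq]
  set Rt : Fin m → Fin n → (Fin K → ℝ) := fun a b =>
    if h : c a = 0 then w0 else (p * α1 a / c a) • R1 a b + (q * α2 a / c a) • R2 a b with hRt
  have hRtmem : ∀ a b, Rt a b ∈ W := by
    intro a b
    by_cases h : c a = 0
    · simp only [hRt]; rw [dif_pos h]; exact hw0
    · simp only [hRt]; rw [dif_neg h]
      refine hWc (hR1 a b) (hR2 a b) (div_nonneg (mul_nonneg hp (hα1.1 a)) (hc0 a))
        (div_nonneg (mul_nonneg hq (hα2.1 a)) (hc0 a)) ?_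
      rw [← add_div, hceq a]
      exact div_self h
  have hkey : ∀ k b, ∑ a, c a * (r k a b + β * Rt a b k)
      = p * (∑ a, α1 a * (r k a b + β * R1 a b k))
        + q * (∑ a, α2 a * (r k a b + β * R2 a b k)) := by
    intro k b
    rw [Finset.mul_sum, Finset.mul_sum, ← Finset.sum_add_distrib]
    refine Finset.sum_congr rfl fun a _ => ?_
    by_cases h : c a = 0
    · have hpa : p * α1 a = 0 := by
        nlinarith [mul_nonneg hp (hα1.1 a), mul_nonneg hq (hα2.1 a), hceq a]
      have hqa : q * α2 a = 0 := by
        nlinarith [mul_nonneg hp (hα1.1 a), mul_nonneg hq (hα2.1 a), hceq a]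
      have e1 : p * (α1 a * (r k a b + β * R1 a b k))
          + q * (α2 a * (r k a b + β * R2 a b k))
          = (p * α1 a) * (r k a b + β * R1 a b k)
          + (q * α2 a) * (r k a b + β * R2 a b k) := by ring
      rw [e1, hpa, hqa, h]
      ring
    · simp only [hRt]
      rw [dif_neg h]
      simp only [Pi.add_apply, Pi.smul_apply, smul_eq_mul]
      field_simp
      ring
  refine ⟨fun k => Finset.univ.sup'
      (Finset.univ_nonempty_iff.mpr (Fin.pos_iff_nonempty.mp hn))
      (fun b => ∑ a, c a * (r k a b + β * Rt a b k)),
    ⟨c, hcs, Rt, hRtmem, fun k => rfl⟩, ?_⟩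
  intro k
  simp only [Pi.add_apply, Pi.smul_apply, smul_eq_mul]
  rw [hu1 k, hu2 k]
  refine Finset.sup'_le _ (fun b => ∑ a, c a * (r k a b + β * Rt a b k)) fun b hb => ?_
  rw [hkey k b]
  exact add_le_add
    (mul_le_mul_of_nonneg_left
      (Finset.le_sup' (fun b => ∑ a, α1 a * (r k a b + β * R1 a b k)) hb) hp)
    (mul_le_mul_of_nonneg_left
      (Finset.le_sup' (fun b => ∑ a, α2 a * (r k a b + β * R2 a b k)) hb) hq)

end PSI_AUX


/-- if `V ∈ 𝓕` then `Λ(Ψ(V)) ∈ 𝓕`. -/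
theorem memF_pareto_psi {K m n : ℕ} (hK : 0 < K) (hm : 0 < m) (hn : 0 < n)
    (β : ℝ) (hβ : β ∈ Set.Ico (0:ℝ) 1)
    (r : Fin K → Fin m → Fin n → ℝ) (hr : ∀ k a b, r k a b ∈ Set.Icc (0:ℝ) (1 - β))
    (V : Set (Fin K → ℝ)) (hV : memF K V) :
    memF K (pareto K (psi K m n hn β r V)) := by
  obtain ⟨hVne, hVbox, hVanti, hVclosed, hVconv⟩ := hV
  have hWbox : upset K V ⊆ Set.Icc 0 1 := fun x hx => hx.1
  have hWne : (upset K V).Nonempty := by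
    obtain ⟨v, hv⟩ := hVne; exact ⟨v, self_mem_upset hVbox hv⟩
  have hWcomp : IsCompact (upset K V) := isCompact_Icc.of_isClosed_subset hVclosed hWbox
  have hSbox : psi K m n hn β r V ⊆ Set.Icc 0 1 := psi_subset_Icc hn hβ hr hVbox
  have hSWbox : psi K m n hn β r (upset K V) ⊆ Set.Icc 0 1 := psi_subset_Icc hn hβ hr hWbox
  have hSWcomp : IsCompact (psi K m n hn β r (upset K V)) := psi_isCompact hn hWcomp
  have hSWne : (psi K m n hn β r (upset K V)).Nonempty := psi_nonempty hn hm hWne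
  have hupeq : upset K (psi K m n hn β r V) = upset K (psi K m n hn β r (upset K V)) := by
    apply Set.Subset.antisymm
    · rintro x ⟨hxb, y, hy, hyx⟩
      exact ⟨hxb, y, psi_mono hn (fun v hv => self_mem_upset hVbox hv) hy, hyx⟩
    · rintro x ⟨hxb, y, hy, hyx⟩
      obtain ⟨u', hu', hu'y⟩ := psi_upset_le hn hβ hy
      exact ⟨hxb, u', hu', hu'y.trans hyx⟩
  have hTcomp : IsCompact (upset K (psi K m n hn β r (upset K V))) := by
    have heq : upset K (psi K m n hn β r (upset K V))
        = ((fun pp : (Fin K → ℝ) × (Fin K → ℝ) => pp.1 + pp.2) ''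
            ((psi K m n hn β r (upset K V)) ×ˢ Set.Icc 0 1)) ∩ Set.Icc 0 1 := by
      ext x
      constructor
      · rintro ⟨hxb, y, hy, hyx⟩
        refine ⟨⟨(y, x - y), ⟨hy, ?_, ?_⟩, by simp⟩, hxb⟩
        · intro k
          simpa using sub_nonneg.mpr (hyx k)
        · intro k
          have h1 : (0:ℝ) ≤ y k := (hSWbox hy).1 k
          have h2 : x k ≤ (1:ℝ) := hxb.2 k
          simp only [Pi.sub_apply, Pi.one_apply]
          linarith
      · rintro ⟨⟨⟨y, d⟩, ⟨hy, hd⟩, rfl⟩, hxb⟩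
        exact ⟨hxb, y, hy, fun k => le_add_of_nonneg_right (hd.1 k)⟩
    rw [heq]
    exact ((hSWcomp.prod isCompact_Icc).image (by fun_prop)).inter_right isClosed_Icc
  have hTbox : upset K (psi K m n hn β r (upset K V)) ⊆ Set.Icc 0 1 := fun x hx => hx.1
  have hTconv : Convex ℝ (upset K (psi K m n hn β r (upset K V))) := by
    rintro x hx y hy p q hp hq hpq
    obtain ⟨hxb, u1, hu1, hu1x⟩ := hx
    obtain ⟨hyb, u2, hu2, hu2y⟩ := hy
    obtain ⟨w0, hw0⟩ := hWne
    obtain ⟨u, hu, hule⟩ := psi_convex_comb hn hVconv hw0 hu1 hu2 hp hq hpq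
    refine ⟨(convex_Icc (0 : Fin K → ℝ) 1) hxb hyb hp hq hpq, u, hu, ?_⟩
    refine hule.trans ?_
    intro k
    simp only [Pi.add_apply, Pi.smul_apply, smul_eq_mul]
    exact add_le_add (mul_le_mul_of_nonneg_left (hu1x k) hp)
      (mul_le_mul_of_nonneg_left (hu2y k) hq)
  have hpar : pareto K (psi K m n hn β r V)
      = pareto K (upset K (psi K m n hn β r (upset K V))) := by
    rw [← pareto_upset_eq hSbox, hupeq]
  have hupar : upset K (pareto K (psi K m n hn β r V))
      = upset K (psi K m n hn β r (upset K V)) := by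
    rw [hpar]
    exact upset_pareto_of_compact hTcomp hTbox upset_idem
  refine ⟨?_, fun x hx => hSbox hx.1, fun u hu v hv huv => hv.2 u hu.1 huv, ?_, ?_⟩
  · rw [hpar]
    obtain ⟨w, hw⟩ := hSWne
    obtain ⟨x, hx, hmin⟩ := exists_min_compact hTcomp ⟨w, self_mem_upset hSWbox hw⟩
    exact ⟨x, hx, hmin⟩
  · rw [hupar]; exact hTcomp.isClosed
  · rw [hupar]; exact hTconv
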